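/- Let T' be a tree and let S be a minimum super dominating set of T' and v a vertex of T' with v ∈ S, such that either N[v] ∩ S̄ = ∅, or N[v] contains no vertex of U_S(T'). Let T be obtained from T' by adding a star of order at least two and joining its center to v. If subdividing any single edge of T' does not increase γ_sp(T'), then subdividing any single edge of T does not increase γ_sp(T). -/

import Mathlib

open SimpleGraph

/-- `S` is a super dominating set of `G`: every vertex `u ∉ S` has some `v ∈ S`
with `N(v) ∩ Sᶜ = {u}`. -/
def SuperDomSet {V : Type} (G : SimpleGraph V) (S : Set V) : Prop :=
  ∀ u ∈ Sᶜ, ∃ v ∈ S, G.neighborSet v ∩ Sᶜ = {u}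

/-- The super domination number `γ_sp(G)`. -/
noncomputable def superDomNum {V : Type} (G : SimpleGraph V) : ℕ :=
  sInf {n | ∃ S : Set V, SuperDomSet G S ∧ S.ncard = n}

/-- `S` is a dominating set of `G`. -/
def DomSet {V : Type} (G : SimpleGraph V) (S : Set V) : Prop :=
  ∀ u ∉ S, ∃ v ∈ S, G.Adj v u

/-- The domination number `γ(G)`. -/
noncomputable def domNum {V : Type} (G : SimpleGraph V) : ℕ :=
  sInf {n | ∃ S : Set V, DomSet G S ∧ S.ncard = n}

/-- `S` is a total dominating set of `G`: every vertex has a neighbor in `S`. -/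
def TotalDomSet {V : Type} (G : SimpleGraph V) (S : Set V) : Prop :=
  ∀ u : V, ∃ v ∈ S, G.Adj v u

/-- The total domination number `γ_t(G)`. -/
noncomputable def totalDomNum {V : Type} (G : SimpleGraph V) : ℕ :=
  sInf {n | ∃ S : Set V, TotalDomSet G S ∧ S.ncard = n}

/-- A leaf is a vertex of degree 1. -/
def IsLeaf {V : Type} (G : SimpleGraph V) (v : V) : Prop :=
  (G.neighborSet v).ncard = 1

/-- A support vertex is a vertex adjacent to a leaf. -/
def IsSupport {V : Type} (G : SimpleGraph V) (v : V) : Prop :=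
  ∃ u, G.Adj v u ∧ IsLeaf G u

/-- The graph obtained from `G` by subdividing each edge in `F` once: for `e ∈ F`
the edge is removed and replaced by a path of length 2 through the new vertex `e`. -/
def subdivide {V : Type} (G : SimpleGraph V) (F : Set (Sym2 V)) :
    SimpleGraph (V ⊕ F) where
  Adj x y :=
    match x, y with
    | Sum.inl a, Sum.inl b => G.Adj a b ∧ s(a, b) ∉ F
    | Sum.inl a, Sum.inr e => a ∈ (e : Sym2 V)
    | Sum.inr e, Sum.inl a => a ∈ (e : Sym2 V)
    | Sum.inr _, Sum.inr _ => False
  symm := by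
    constructor
    rintro (a | e) (b | f) h
    · exact ⟨h.1.symm, by rw [Sym2.eq_swap]; exact h.2⟩
    · exact h
    · exact h
    · exact h
  loopless := by
    constructor
    rintro (a | e) h
    · exact G.loopless.irrefl a h.1
    · exact h

/-- `w` is an external private neighbor of `u` with respect to `Sᶜ`. -/
def IsEPN {V : Type} (G : SimpleGraph V) (S : Set V) (u w : V) : Prop :=
  w ∈ S ∧ G.neighborSet w ∩ Sᶜ = {u}

/-- `U_S(G)`: the set of vertices that are the unique external private neighbor of
some vertex of `Sᶜ` having exactly one external private neighbor. -/
def USet {V : Type} (G : SimpleGraph V) (S : Set V) : Set V :=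
  {w | ∃ u ∈ Sᶜ, IsEPN G S u w ∧ ∀ w', IsEPN G S u w' → w' = w}

/-- Add a star of order `m` (center = index `0`, leaves = the other indices) to `G`,
joining its center to the vertex `v`. -/
def addStar {V : Type} (G : SimpleGraph V) (v : V) (m : ℕ) : SimpleGraph (V ⊕ Fin m) where
  Adj x y :=
    match x, y with
    | Sum.inl a, Sum.inl b => G.Adj a b
    | Sum.inl a, Sum.inr i => a = v ∧ (i : ℕ) = 0
    | Sum.inr i, Sum.inl a => a = v ∧ (i : ℕ) = 0
    | Sum.inr i, Sum.inr j => ((i : ℕ) = 0 ∧ (j : ℕ) ≠ 0) ∨ ((j : ℕ) = 0 ∧ (i : ℕ) ≠ 0)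
  symm := by
    constructor
    rintro (a | i) (b | j) h
    · exact h.symm
    · exact h
    · exact h
    · exact h.symm
  loopless := by
    constructor
    rintro (a | i) h
    · exact G.loopless.irrefl a h
    · rcases h with ⟨h1, h2⟩ | ⟨h1, h2⟩ <;> exact h2 h1

section Helpers

variable {V : Type}

lemma superDomSet_univ (G : SimpleGraph V) : SuperDomSet G Set.univ := by
  intro u hu; simp at hu

lemma superDomNum_le_ncard {G : SimpleGraph V} {S : Set V} (h : SuperDomSet G S) :
    superDomNum G ≤ S.ncard :=
  Nat.sInf_le ⟨S, h, rfl⟩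

lemma exists_min_sds (G : SimpleGraph V) :
    ∃ S : Set V, SuperDomSet G S ∧ S.ncard = superDomNum G := by
  have h : ({n | ∃ S : Set V, SuperDomSet G S ∧ S.ncard = n}).Nonempty :=
    ⟨(Set.univ : Set V).ncard, Set.univ, superDomSet_univ G, rfl⟩
  obtain ⟨S, hS, hc⟩ := Nat.sInf_mem h
  exact ⟨S, hS, hc⟩

@[simp] lemma subdivide_adj_inl_inl {G : SimpleGraph V} {F : Set (Sym2 V)} {a b : V} :
    (subdivide G F).Adj (Sum.inl a) (Sum.inl b) ↔ G.Adj a b ∧ s(a, b) ∉ F := Iff.rfl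

@[simp] lemma subdivide_adj_inl_inr {G : SimpleGraph V} {F : Set (Sym2 V)} {a : V} {e : F} :
    (subdivide G F).Adj (Sum.inl a) (Sum.inr e) ↔ a ∈ (e : Sym2 V) := Iff.rfl

@[simp] lemma subdivide_adj_inr_inl {G : SimpleGraph V} {F : Set (Sym2 V)} {a : V} {e : F} :
    (subdivide G F).Adj (Sum.inr e) (Sum.inl a) ↔ a ∈ (e : Sym2 V) := Iff.rfl

@[simp] lemma subdivide_adj_inr_inr {G : SimpleGraph V} {F : Set (Sym2 V)} {e f : F} :
    (subdivide G F).Adj (Sum.inr e) (Sum.inr f) ↔ False := Iff.rfl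

@[simp] lemma addStar_adj_inl_inl {G : SimpleGraph V} {v : V} {m : ℕ} {a b : V} :
    (addStar G v m).Adj (Sum.inl a) (Sum.inl b) ↔ G.Adj a b := Iff.rfl

@[simp] lemma addStar_adj_inl_inr {G : SimpleGraph V} {v : V} {m : ℕ} {a : V} {i : Fin m} :
    (addStar G v m).Adj (Sum.inl a) (Sum.inr i) ↔ a = v ∧ (i : ℕ) = 0 := Iff.rfl

@[simp] lemma addStar_adj_inr_inl {G : SimpleGraph V} {v : V} {m : ℕ} {a : V} {i : Fin m} :
    (addStar G v m).Adj (Sum.inr i) (Sum.inl a) ↔ a = v ∧ (i : ℕ) = 0 := Iff.rfl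

@[simp] lemma addStar_adj_inr_inr {G : SimpleGraph V} {v : V} {m : ℕ} {i j : Fin m} :
    (addStar G v m).Adj (Sum.inr i) (Sum.inr j) ↔
      ((i : ℕ) = 0 ∧ (j : ℕ) ≠ 0) ∨ ((j : ℕ) = 0 ∧ (i : ℕ) ≠ 0) := Iff.rfl

end Helpers
section Witness

variable {V : Type}

lemma mem_of_witness {G : SimpleGraph V} {S : Set V} {s u : V}
    (h : G.neighborSet s ∩ Sᶜ = {u}) : G.Adj s u ∧ u ∉ S := by
  have : u ∈ G.neighborSet s ∩ Sᶜ := by rw [h]; rfl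
  exact ⟨this.1, this.2⟩

lemma exists_witness_outside {T' : SimpleGraph V} (hT' : T'.IsTree) {S : Set V}
    (hS : SuperDomSet T' S) {v : V} (hvS : v ∈ S)
    (hv2 : insert v (T'.neighborSet v) ∩ USet T' S = ∅) :
    ∀ u ∈ Sᶜ, ∃ s ∈ S, s ∉ insert v (T'.neighborSet v) ∧
      T'.neighborSet s ∩ Sᶜ = {u} := by
  intro u hu
  have huv : u ≠ v := fun h => hu (h ▸ hvS)
  obtain ⟨s₀, hs₀S, hs₀⟩ := hS u hu
  by_cases h0 : s₀ ∈ insert v (T'.neighborSet v)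
  · by_cases huniq : ∀ w', IsEPN T' S u w' → w' = s₀
    · exfalso
      have : s₀ ∈ insert v (T'.neighborSet v) ∩ USet T' S :=
        ⟨h0, ⟨u, hu, ⟨hs₀S, hs₀⟩, huniq⟩⟩
      rw [hv2] at this
      exact this
    · push_neg at huniq
      obtain ⟨s₁, ⟨hs₁S, hs₁⟩, hne⟩ := huniq
      by_cases h1 : s₁ ∈ insert v (T'.neighborSet v)
      · exfalso
        obtain ⟨hadj₀, huS⟩ := mem_of_witness hs₀
        obtain ⟨hadj₁, _⟩ := mem_of_witness hs₁
        obtain ⟨p, hp, hup⟩ := (SimpleGraph.isTree_iff_existsUnique_path.1 hT').2 u v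
        have mkpath : ∀ s : V, s ∈ insert v (T'.neighborSet v) → T'.Adj s u →
            ∃ q : T'.Walk u v, q.IsPath ∧ q.support.tail.head? = some s := by
          intro s hsv hadj
          rcases hsv with rfl | hsv
          · refine ⟨SimpleGraph.Walk.cons hadj.symm SimpleGraph.Walk.nil, ?_, ?_⟩
            · simp [SimpleGraph.Walk.isPath_def, hadj.ne']
            · simp
          · have hsv' : T'.Adj s v := (show T'.Adj v s from hsv).symm
            refine ⟨SimpleGraph.Walk.cons hadj.symm
              (SimpleGraph.Walk.cons hsv' SimpleGraph.Walk.nil), ?_, ?_⟩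
            · simp only [SimpleGraph.Walk.isPath_def, SimpleGraph.Walk.support_cons,
                SimpleGraph.Walk.support_nil]
              simp [List.nodup_cons, hadj.ne', hsv'.ne, huv]
            · simp
        obtain ⟨q₀, hq₀, hh₀⟩ := mkpath s₀ h0 hadj₀
        obtain ⟨q₁, hq₁, hh₁⟩ := mkpath s₁ h1 hadj₁
        have : q₀ = q₁ := by rw [hup q₀ hq₀, hup q₁ hq₁]
        rw [this, hh₁] at hh₀
        have heq : s₁ = s₀ := by simpa using hh₀
        exact hne heq
      · exact ⟨s₁, hs₁S, h1, hs₁⟩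
  · exact ⟨s₀, hs₀S, h0, hs₀⟩

end Witness
section Constructions

variable {V : Type}

lemma subtype_singleton_eq {α : Type} {e : α} (f : ({e} : Set α)) : f = ⟨e, rfl⟩ :=
  Subtype.ext f.2

lemma ncard_ne_singleton {m : ℕ} (j : Fin m) : {k : Fin m | k ≠ j}.ncard = m - 1 := by
  have h1 : {k : Fin m | k ≠ j} = ({j} : Set (Fin m))ᶜ := by ext k; simp
  have h2 : ({j} : Set (Fin m)).ncard + (({j} : Set (Fin m))ᶜ).ncard = m := by
    rw [Set.ncard_add_ncard_compl, Nat.card_eq_fintype_card, Fintype.card_fin]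
  have h3 : ({j} : Set (Fin m)).ncard = 1 := Set.ncard_singleton j
  rw [h1]; omega

lemma starLeaf₂ [Fintype V] {T' : SimpleGraph V} {v : V} {S : Set V} (hvS : v ∈ S)
    {m : ℕ} (hm : 2 ≤ m)
    (hwit : ∀ u ∈ Sᶜ, ∃ s ∈ S, s ∉ insert v (T'.neighborSet v) ∧
      T'.neighborSet s ∩ Sᶜ = {u})
    {i j : Fin m} (hi : (i : ℕ) = 0) (hj : (j : ℕ) ≠ 0)
    {e : Sym2 (V ⊕ Fin m)} (hee : e = s(Sum.inr i, Sum.inr j)) :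
    ∃ D : Set ((V ⊕ Fin m) ⊕ ({e} : Set (Sym2 (V ⊕ Fin m)))),
      SuperDomSet (subdivide (addStar T' v m) {e}) D ∧ D.ncard + 1 ≤ S.ncard + m := by
  classical
  set D : Set ((V ⊕ Fin m) ⊕ ({e} : Set (Sym2 (V ⊕ Fin m)))) :=
    (fun x : V => Sum.inl (Sum.inl x)) '' (S \ {v}) ∪
    ((fun k : Fin m => Sum.inl (Sum.inr k)) '' {k | k ≠ j} ∪ {Sum.inr ⟨e, rfl⟩}) with hDdef
  have hij : i ≠ j := fun h => hj (h ▸ hi)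
  -- membership simp facts
  have hmeml : ∀ x : V, (Sum.inl (Sum.inl x) ∈ D) ↔ x ∈ S ∧ x ≠ v := by
    intro x; simp [hDdef]
  have hmemc : ∀ k : Fin m, (Sum.inl (Sum.inr k) ∈ D) ↔ k ≠ j := by
    intro k; simp [hDdef]
  have hmemr : ∀ f, (Sum.inr f ∈ D) := by
    intro f; rw [subtype_singleton_eq f]; simp [hDdef]
  refine ⟨D, ?_, ?_⟩
  · intro u hu
    rcases u with (x | k) | f
    · -- u = inl (inl x)
      have hx : x ∉ S ∨ x = v := by
        by_contra h
        push_neg at h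
        exact hu ((hmeml x).2 ⟨h.1, h.2⟩)
      by_cases hxv : x = v
      · -- witness : the center
        subst hxv
        refine ⟨Sum.inl (Sum.inr i), (hmemc i).2 hij, ?_⟩
        ext z
        rcases z with (y | k) | f
        · simp only [Set.mem_inter_iff, SimpleGraph.mem_neighborSet,
            subdivide_adj_inl_inl, addStar_adj_inr_inl, Set.mem_compl_iff,
            Set.mem_singleton_iff, hmeml, hee, Sym2.eq_iff, Sum.inl.injEq]
          constructor
          · rintro ⟨⟨⟨rfl, -⟩, -⟩, h2⟩; rfl
          · rintro rfl
            simp [hi]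
        · simp only [Set.mem_inter_iff, SimpleGraph.mem_neighborSet,
            subdivide_adj_inl_inl, addStar_adj_inr_inr, Set.mem_compl_iff,
            Set.mem_singleton_iff, hmemc, hee, Sym2.eq_iff, Sum.inr.injEq]
          constructor
          · rintro ⟨⟨h1, h2⟩, h3⟩
            exfalso
            have hkj := not_not.1 h3
            subst hkj
            apply h2
            simp
          · rintro h
            exact absurd h (by simp)
        · simp only [Set.mem_inter_iff, SimpleGraph.mem_neighborSet,
            subdivide_adj_inl_inr, Set.mem_compl_iff, Set.mem_singleton_iff]
          constructor
          · rintro ⟨h1, h2⟩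
            exact absurd (hmemr f) h2
          · rintro h
            exact absurd h (by simp)
      · -- x ∈ Sᶜ : use the witness from hwit
        have hxS : x ∉ S := by tauto
        obtain ⟨s, hsS, hsNv, hsw⟩ := hwit x hxS
        have hsv : s ≠ v := fun h => hsNv (by rw [h]; exact Set.mem_insert v _)
        refine ⟨Sum.inl (Sum.inl s), (hmeml s).2 ⟨hsS, hsv⟩, ?_⟩
        ext z
        rcases z with (y | k) | f
        · simp only [Set.mem_inter_iff, SimpleGraph.mem_neighborSet,
            subdivide_adj_inl_inl, addStar_adj_inl_inl, Set.mem_compl_iff,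
            Set.mem_singleton_iff, hmeml, hee, Sym2.eq_iff, Sum.inl.injEq]
          constructor
          · rintro ⟨⟨h1, -⟩, h2⟩
            push_neg at h2
            by_cases hyv : y = v
            · exfalso
              apply hsNv
              exact Set.mem_insert_of_mem v (T'.adj_symm (hyv ▸ h1))
            · have hyS : y ∉ S := fun hy => hyv (h2 hy)
              have : y ∈ T'.neighborSet s ∩ Sᶜ := ⟨h1, hyS⟩
              rw [hsw] at this
              exact this
          · intro hyx
            have hxN : x ∈ T'.neighborSet s ∩ Sᶜ := by rw [hsw]; rfl
            rw [hyx]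
            exact ⟨⟨hxN.1, by simp⟩, fun h => hxN.2 h.1⟩
        · simp only [Set.mem_inter_iff, SimpleGraph.mem_neighborSet,
            subdivide_adj_inl_inl, addStar_adj_inl_inr, Set.mem_compl_iff,
            Set.mem_singleton_iff]
          constructor
          · rintro ⟨⟨⟨rfl, -⟩, -⟩, -⟩
            exact absurd rfl hsv
          · rintro h
            exact absurd h (by simp)
        · simp only [Set.mem_inter_iff, SimpleGraph.mem_neighborSet,
            subdivide_adj_inl_inr, Set.mem_compl_iff, Set.mem_singleton_iff]
          constructor
          · rintro ⟨h1, h2⟩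
            exact absurd (hmemr f) h2
          · rintro h
            exact absurd h (by simp)
    · -- u = inl (inr k) : must be the leaf j
      have hk : k = j := by
        by_contra h
        exact hu ((hmemc k).2 h)
      rw [hk] at hu ⊢
      refine ⟨Sum.inr ⟨e, rfl⟩, hmemr _, ?_⟩
      ext z
      rcases z with (y | k') | f
      · simp only [Set.mem_inter_iff, SimpleGraph.mem_neighborSet,
          subdivide_adj_inr_inl, Set.mem_compl_iff, Set.mem_singleton_iff, hee]
        constructor
        · rintro ⟨h1, h2⟩
          simp [Sym2.mem_iff] at h1
        · rintro h
          exact absurd h (by simp)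
      · simp only [Set.mem_inter_iff, SimpleGraph.mem_neighborSet,
          subdivide_adj_inr_inl, Set.mem_compl_iff, Set.mem_singleton_iff, hmemc, hee,
          Sum.inl.injEq, Sum.inr.injEq]
        constructor
        · rintro ⟨-, h2⟩
          exact not_not.1 h2
        · rintro rfl
          refine ⟨?_, not_not.2 rfl⟩
          simp
      · simp only [Set.mem_inter_iff, SimpleGraph.mem_neighborSet,
          subdivide_adj_inr_inr, Set.mem_compl_iff, Set.mem_singleton_iff]
        constructor
        · rintro ⟨h1, h2⟩
          exact h1.elim
        · rintro h
          exact absurd h (by simp)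
    · -- u = inr f : but inr f ∈ D always
      exact absurd (hmemr f) hu
  · -- cardinality
    have h1 := Set.ncard_union_le ((fun x : V => Sum.inl (Sum.inl x)) '' (S \ {v}))
      (((fun k : Fin m => Sum.inl (Sum.inr k)) '' {k | k ≠ j} ∪ {Sum.inr ⟨e, rfl⟩}) :
        Set ((V ⊕ Fin m) ⊕ ({e} : Set (Sym2 (V ⊕ Fin m)))))
    have h2 := Set.ncard_union_le ((fun k : Fin m => Sum.inl (Sum.inr k)) '' {k | k ≠ j})
      ({Sum.inr ⟨e, rfl⟩} : Set ((V ⊕ Fin m) ⊕ ({e} : Set (Sym2 (V ⊕ Fin m)))))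
    have h3 : (((fun x : V => Sum.inl (Sum.inl x)) :
          V → (V ⊕ Fin m) ⊕ ({e} : Set (Sym2 (V ⊕ Fin m)))) '' (S \ {v})).ncard
        = (S \ {v}).ncard :=
      Set.ncard_image_of_injective _ (fun a b h => by simpa using h)
    have h4 : (((fun k : Fin m => Sum.inl (Sum.inr k)) :
          Fin m → (V ⊕ Fin m) ⊕ ({e} : Set (Sym2 (V ⊕ Fin m)))) '' {k | k ≠ j}).ncard
        = ({k : Fin m | k ≠ j}).ncard :=
      Set.ncard_image_of_injective _ (fun a b h => by simpa using h)
    have h5 := ncard_ne_singleton j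
    have h6 : (S \ {v}).ncard = S.ncard - 1 := Set.ncard_diff_singleton_of_mem hvS
    have h7 : 0 < S.ncard := (Set.ncard_pos (Set.toFinite S)).2 ⟨v, hvS⟩
    have h8 : ({Sum.inr ⟨e, rfl⟩} : Set ((V ⊕ Fin m) ⊕ ({e} : Set (Sym2 (V ⊕ Fin m))))).ncard = 1 :=
      Set.ncard_singleton _
    rw [hDdef]
    omega
end Constructions
section Constructions2

variable {V : Type}

lemma ncard_val_ne {m t : ℕ} (ht : t < m) : {k : Fin m | (k : ℕ) ≠ t}.ncard = m - 1 := by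
  have h1 : {k : Fin m | (k : ℕ) ≠ t} = {k : Fin m | k ≠ ⟨t, ht⟩} := by
    ext k; simp [Fin.ext_iff]
  rw [h1, ncard_ne_singleton]

lemma hNv_of_hv1 {T' : SimpleGraph V} {S : Set V} {v : V}
    (hv1 : insert v (T'.neighborSet v) ∩ Sᶜ = ∅) :
    ∀ y, T'.Adj v y → y ∈ S := by
  intro y hy
  by_contra h
  have : y ∈ insert v (T'.neighborSet v) ∩ Sᶜ := ⟨Set.mem_insert_of_mem v hy, h⟩
  rw [hv1] at this
  exact this

lemma wit_ne_v {T' : SimpleGraph V} {S : Set V} {v : V} (hS : SuperDomSet T' S)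
    (hv1 : insert v (T'.neighborSet v) ∩ Sᶜ = ∅) :
    ∀ u ∈ Sᶜ, ∃ s ∈ S, s ≠ v ∧ T'.neighborSet s ∩ Sᶜ = {u} := by
  intro u hu
  obtain ⟨s, hsS, hsw⟩ := hS u hu
  refine ⟨s, hsS, ?_, hsw⟩
  rintro rfl
  obtain ⟨hadj, huS⟩ := mem_of_witness hsw
  exact huS (hNv_of_hv1 hv1 u hadj)

lemma starLeaf₁ [Fintype V] {T' : SimpleGraph V} {v : V} {S : Set V}
    (hS : SuperDomSet T' S) (hvS : v ∈ S) {m : ℕ} (hm : 2 ≤ m)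
    (hv1 : insert v (T'.neighborSet v) ∩ Sᶜ = ∅)
    {i j : Fin m} (hi : (i : ℕ) = 0) (hj : (j : ℕ) ≠ 0)
    {e : Sym2 (V ⊕ Fin m)} (hee : e = s(Sum.inr i, Sum.inr j)) :
    ∃ D : Set ((V ⊕ Fin m) ⊕ ({e} : Set (Sym2 (V ⊕ Fin m)))),
      SuperDomSet (subdivide (addStar T' v m) {e}) D ∧ D.ncard + 1 ≤ S.ncard + m := by
  classical
  set D : Set ((V ⊕ Fin m) ⊕ ({e} : Set (Sym2 (V ⊕ Fin m)))) :=
    (fun x : V => Sum.inl (Sum.inl x)) '' S ∪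
    (fun k : Fin m => Sum.inl (Sum.inr k)) '' {k | (k : ℕ) ≠ 0} with hDdef
  have hmeml : ∀ x : V, (Sum.inl (Sum.inl x) ∈ D) ↔ x ∈ S := by
    intro x; simp [hDdef]
  have hmemc : ∀ k : Fin m, (Sum.inl (Sum.inr k) ∈ D) ↔ (k : ℕ) ≠ 0 := by
    intro k; simp [hDdef]
  have hmemr : ∀ f, (Sum.inr f ∉ D) := by
    intro f; simp [hDdef]
  refine ⟨D, ?_, ?_⟩
  · intro u hu
    rcases u with (x | k) | f
    · -- u = inl (inl x) with x ∉ S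
      have hxS : x ∉ S := fun h => hu ((hmeml x).2 h)
      obtain ⟨s, hsS, hsv, hsw⟩ := wit_ne_v hS hv1 x hxS
      refine ⟨Sum.inl (Sum.inl s), (hmeml s).2 hsS, ?_⟩
      ext z
      rcases z with (y | k) | f
      · simp only [Set.mem_inter_iff, SimpleGraph.mem_neighborSet,
          subdivide_adj_inl_inl, addStar_adj_inl_inl, Set.mem_compl_iff,
          Set.mem_singleton_iff, hmeml, hee, Sym2.eq_iff, Sum.inl.injEq]
        constructor
        · rintro ⟨⟨h1, -⟩, h2⟩
          have : y ∈ T'.neighborSet s ∩ Sᶜ := ⟨h1, h2⟩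
          rw [hsw] at this
          exact this
        · intro hyx
          have hxN : x ∈ T'.neighborSet s ∩ Sᶜ := by rw [hsw]; rfl
          rw [hyx]
          exact ⟨⟨hxN.1, by simp⟩, hxN.2⟩
      · simp only [Set.mem_inter_iff, SimpleGraph.mem_neighborSet,
          subdivide_adj_inl_inl, addStar_adj_inl_inr, Set.mem_compl_iff,
          Set.mem_singleton_iff]
        constructor
        · rintro ⟨⟨⟨rfl, -⟩, -⟩, -⟩
          exact absurd rfl hsv
        · rintro h
          exact absurd h (by simp)
      · simp only [Set.mem_inter_iff, SimpleGraph.mem_neighborSet,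
          subdivide_adj_inl_inr, Set.mem_compl_iff, Set.mem_singleton_iff]
        constructor
        · rintro ⟨h1, -⟩
          rw [subtype_singleton_eq f] at h1
          simp [hee] at h1
        · rintro h
          exact absurd h (by simp)
    · -- u = inl (inr k) : the center
      have hk0 : (k : ℕ) = 0 := by
        by_contra h
        exact hu ((hmemc k).2 h)
      refine ⟨Sum.inl (Sum.inl v), (hmeml v).2 hvS, ?_⟩
      ext z
      rcases z with (y | k') | f
      · simp only [Set.mem_inter_iff, SimpleGraph.mem_neighborSet,
          subdivide_adj_inl_inl, addStar_adj_inl_inl, Set.mem_compl_iff,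
          Set.mem_singleton_iff, hmeml]
        constructor
        · rintro ⟨⟨h1, -⟩, h2⟩
          exact absurd (hNv_of_hv1 hv1 y h1) h2
        · rintro h
          exact absurd h (by simp)
      · simp only [Set.mem_inter_iff, SimpleGraph.mem_neighborSet,
          subdivide_adj_inl_inl, addStar_adj_inl_inr, Set.mem_compl_iff,
          Set.mem_singleton_iff, hmemc, Sum.inl.injEq, Sum.inr.injEq]
        constructor
        · rintro ⟨⟨⟨-, h1⟩, -⟩, -⟩
          exact Fin.val_injective (h1.trans hk0.symm)
        · rintro rfl
          simp [hee, hk0]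
      · simp only [Set.mem_inter_iff, SimpleGraph.mem_neighborSet,
          subdivide_adj_inl_inr, Set.mem_compl_iff, Set.mem_singleton_iff]
        constructor
        · rintro ⟨h1, -⟩
          rw [subtype_singleton_eq f] at h1
          simp [hee] at h1
        · rintro h
          exact absurd h (by simp)
    · -- u = inr f : the subdivision vertex ; witness is the leaf j
      refine ⟨Sum.inl (Sum.inr j), (hmemc j).2 hj, ?_⟩
      ext z
      rcases z with (y | k') | f'
      · simp only [Set.mem_inter_iff, SimpleGraph.mem_neighborSet,
          subdivide_adj_inl_inl, addStar_adj_inr_inl, Set.mem_compl_iff,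
          Set.mem_singleton_iff]
        constructor
        · rintro ⟨⟨⟨-, h1⟩, -⟩, -⟩
          exact absurd h1 hj
        · rintro h
          exact absurd h (by simp)
      · simp only [Set.mem_inter_iff, SimpleGraph.mem_neighborSet,
          subdivide_adj_inl_inl, addStar_adj_inr_inr, Set.mem_compl_iff,
          Set.mem_singleton_iff, hmemc]
        constructor
        · rintro ⟨⟨h1, h2⟩, -⟩
          exfalso
          rcases h1 with ⟨h3, -⟩ | ⟨h3, -⟩
          · exact hj h3
          · have : k' = i := Fin.val_injective (h3.trans hi.symm)
            subst this
            apply h2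
            simp [hee, Sym2.eq_iff]
        · rintro h
          exact absurd h (by simp)
      · simp only [Set.mem_inter_iff, SimpleGraph.mem_neighborSet,
          subdivide_adj_inl_inr, Set.mem_compl_iff, Set.mem_singleton_iff]
        rw [subtype_singleton_eq f', subtype_singleton_eq f]
        constructor
        · rintro -
          rfl
        · rintro -
          exact ⟨by simp [hee], hmemr _⟩
  · -- cardinality
    have h1 := Set.ncard_union_le ((fun x : V => Sum.inl (Sum.inl x)) '' S)
      (((fun k : Fin m => Sum.inl (Sum.inr k)) '' {k | (k : ℕ) ≠ 0}) :
        Set ((V ⊕ Fin m) ⊕ ({e} : Set (Sym2 (V ⊕ Fin m)))))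
    have h3 : (((fun x : V => Sum.inl (Sum.inl x)) :
          V → (V ⊕ Fin m) ⊕ ({e} : Set (Sym2 (V ⊕ Fin m)))) '' S).ncard = S.ncard :=
      Set.ncard_image_of_injective _ (fun a b h => by simpa using h)
    have h4 : (((fun k : Fin m => Sum.inl (Sum.inr k)) :
          Fin m → (V ⊕ Fin m) ⊕ ({e} : Set (Sym2 (V ⊕ Fin m)))) '' {k | (k : ℕ) ≠ 0}).ncard
        = ({k : Fin m | (k : ℕ) ≠ 0}).ncard :=
      Set.ncard_image_of_injective _ (fun a b h => by simpa using h)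
    have h5 := ncard_val_ne (show 0 < m by omega)
    rw [hDdef]
    omega

end Constructions2
section Constructions3

variable {V : Type}

lemma bridge₁ [Fintype V] {T' : SimpleGraph V} {v : V} {S : Set V}
    (hS : SuperDomSet T' S) (hvS : v ∈ S) {m : ℕ} (hm : 2 ≤ m)
    (hv1 : insert v (T'.neighborSet v) ∩ Sᶜ = ∅)
    {i : Fin m} (hi : (i : ℕ) = 0)
    {e : Sym2 (V ⊕ Fin m)} (hee : e = s(Sum.inl v, Sum.inr i)) :
    ∃ D : Set ((V ⊕ Fin m) ⊕ ({e} : Set (Sym2 (V ⊕ Fin m)))),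
      SuperDomSet (subdivide (addStar T' v m) {e}) D ∧ D.ncard + 1 ≤ S.ncard + m := by
  classical
  set k₁ : Fin m := ⟨1, by omega⟩ with hk₁def
  set D : Set ((V ⊕ Fin m) ⊕ ({e} : Set (Sym2 (V ⊕ Fin m)))) :=
    (fun x : V => Sum.inl (Sum.inl x)) '' S ∪
    (fun k : Fin m => Sum.inl (Sum.inr k)) '' {k | (k : ℕ) ≠ 0} with hDdef
  have hmeml : ∀ x : V, (Sum.inl (Sum.inl x) ∈ D) ↔ x ∈ S := by
    intro x; simp [hDdef]
  have hmemc : ∀ k : Fin m, (Sum.inl (Sum.inr k) ∈ D) ↔ (k : ℕ) ≠ 0 := by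
    intro k; simp [hDdef]
  have hmemr : ∀ f, (Sum.inr f ∉ D) := by
    intro f; simp [hDdef]
  refine ⟨D, ?_, ?_⟩
  · intro u hu
    rcases u with (x | k) | f
    · -- u = inl (inl x) with x ∉ S
      have hxS : x ∉ S := fun h => hu ((hmeml x).2 h)
      obtain ⟨s, hsS, hsv, hsw⟩ := wit_ne_v hS hv1 x hxS
      refine ⟨Sum.inl (Sum.inl s), (hmeml s).2 hsS, ?_⟩
      ext z
      rcases z with (y | k) | f
      · simp only [Set.mem_inter_iff, SimpleGraph.mem_neighborSet,
          subdivide_adj_inl_inl, addStar_adj_inl_inl, Set.mem_compl_iff,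
          Set.mem_singleton_iff, hmeml, Sum.inl.injEq]
        constructor
        · rintro ⟨⟨h1, -⟩, h2⟩
          have : y ∈ T'.neighborSet s ∩ Sᶜ := ⟨h1, h2⟩
          rw [hsw] at this
          exact this
        · intro hyx
          have hxN : x ∈ T'.neighborSet s ∩ Sᶜ := by rw [hsw]; rfl
          rw [hyx]
          exact ⟨⟨hxN.1, by simp [hee]⟩, hxN.2⟩
      · simp only [Set.mem_inter_iff, SimpleGraph.mem_neighborSet,
          subdivide_adj_inl_inl, addStar_adj_inl_inr, Set.mem_compl_iff,
          Set.mem_singleton_iff]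
        constructor
        · rintro ⟨⟨⟨rfl, -⟩, -⟩, -⟩
          exact absurd rfl hsv
        · rintro h
          exact absurd h (by simp)
      · simp only [Set.mem_inter_iff, SimpleGraph.mem_neighborSet,
          subdivide_adj_inl_inr, Set.mem_compl_iff, Set.mem_singleton_iff]
        constructor
        · rintro ⟨h1, -⟩
          rw [subtype_singleton_eq f] at h1
          simp only [hee, Sym2.mem_iff] at h1
          rcases h1 with h1 | h1
          · exact absurd (by simpa using h1) hsv
          · simp at h1
        · rintro h
          exact absurd h (by simp)
    · -- u = inl (inr k) : the center ; witness is the leaf k₁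
      have hk0 : (k : ℕ) = 0 := by
        by_contra h
        exact hu ((hmemc k).2 h)
      refine ⟨Sum.inl (Sum.inr k₁), (hmemc k₁).2 (by simp [hk₁def]), ?_⟩
      ext z
      rcases z with (y | k') | f
      · simp only [Set.mem_inter_iff, SimpleGraph.mem_neighborSet,
          subdivide_adj_inl_inl, addStar_adj_inr_inl, Set.mem_compl_iff,
          Set.mem_singleton_iff]
        constructor
        · rintro ⟨⟨⟨-, h1⟩, -⟩, -⟩
          simp [hk₁def] at h1
        · rintro h
          exact absurd h (by simp)
      · simp only [Set.mem_inter_iff, SimpleGraph.mem_neighborSet,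
          subdivide_adj_inl_inl, addStar_adj_inr_inr, Set.mem_compl_iff,
          Set.mem_singleton_iff, hmemc, Sum.inl.injEq, Sum.inr.injEq]
        constructor
        · rintro ⟨⟨h1, -⟩, -⟩
          rcases h1 with ⟨h3, -⟩ | ⟨h3, -⟩
          · exact absurd h3 (by simp [hk₁def])
          · exact Fin.val_injective (h3.trans hk0.symm)
        · rintro rfl
          simp [hee, hk0, hk₁def]
      · simp only [Set.mem_inter_iff, SimpleGraph.mem_neighborSet,
          subdivide_adj_inl_inr, Set.mem_compl_iff, Set.mem_singleton_iff]
        constructor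
        · rintro ⟨h1, -⟩
          rw [subtype_singleton_eq f] at h1
          simp [hee, Sym2.mem_iff, Fin.ext_iff, hi, hk₁def] at h1
        · rintro h
          exact absurd h (by simp)
    · -- u = inr f : the subdivision vertex ; witness is v
      refine ⟨Sum.inl (Sum.inl v), (hmeml v).2 hvS, ?_⟩
      ext z
      rcases z with (y | k') | f'
      · simp only [Set.mem_inter_iff, SimpleGraph.mem_neighborSet,
          subdivide_adj_inl_inl, addStar_adj_inl_inl, Set.mem_compl_iff,
          Set.mem_singleton_iff, hmeml]
        constructor
        · rintro ⟨⟨h1, -⟩, h2⟩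
          exact absurd (hNv_of_hv1 hv1 y h1) h2
        · rintro h
          exact absurd h (by simp)
      · simp only [Set.mem_inter_iff, SimpleGraph.mem_neighborSet,
          subdivide_adj_inl_inl, addStar_adj_inl_inr, Set.mem_compl_iff,
          Set.mem_singleton_iff]
        constructor
        · rintro ⟨⟨⟨-, h1⟩, h2⟩, -⟩
          exfalso
          have : k' = i := Fin.val_injective (h1.trans hi.symm)
          subst this
          exact h2 (by simp [hee])
        · rintro h
          exact absurd h (by simp)
      · simp only [Set.mem_inter_iff, SimpleGraph.mem_neighborSet,
          subdivide_adj_inl_inr, Set.mem_compl_iff, Set.mem_singleton_iff]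
        rw [subtype_singleton_eq f', subtype_singleton_eq f]
        constructor
        · rintro -
          rfl
        · rintro -
          exact ⟨by simp [hee], hmemr _⟩
  · -- cardinality
    have h1 := Set.ncard_union_le ((fun x : V => Sum.inl (Sum.inl x)) '' S)
      (((fun k : Fin m => Sum.inl (Sum.inr k)) '' {k | (k : ℕ) ≠ 0}) :
        Set ((V ⊕ Fin m) ⊕ ({e} : Set (Sym2 (V ⊕ Fin m)))))
    have h3 : (((fun x : V => Sum.inl (Sum.inl x)) :
          V → (V ⊕ Fin m) ⊕ ({e} : Set (Sym2 (V ⊕ Fin m)))) '' S).ncard = S.ncard :=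
      Set.ncard_image_of_injective _ (fun a b h => by simpa using h)
    have h4 : (((fun k : Fin m => Sum.inl (Sum.inr k)) :
          Fin m → (V ⊕ Fin m) ⊕ ({e} : Set (Sym2 (V ⊕ Fin m)))) '' {k | (k : ℕ) ≠ 0}).ncard
        = ({k : Fin m | (k : ℕ) ≠ 0}).ncard :=
      Set.ncard_image_of_injective _ (fun a b h => by simpa using h)
    have h5 := ncard_val_ne (show 0 < m by omega)
    rw [hDdef]
    omega

lemma bridge₂ [Fintype V] {T' : SimpleGraph V} {v : V} {S : Set V} (hvS : v ∈ S)
    {m : ℕ} (hm : 2 ≤ m)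
    (hwit : ∀ u ∈ Sᶜ, ∃ s ∈ S, s ∉ insert v (T'.neighborSet v) ∧
      T'.neighborSet s ∩ Sᶜ = {u})
    {i : Fin m} (hi : (i : ℕ) = 0)
    {e : Sym2 (V ⊕ Fin m)} (hee : e = s(Sum.inl v, Sum.inr i)) :
    ∃ D : Set ((V ⊕ Fin m) ⊕ ({e} : Set (Sym2 (V ⊕ Fin m)))),
      SuperDomSet (subdivide (addStar T' v m) {e}) D ∧ D.ncard + 1 ≤ S.ncard + m := by
  classical
  set D : Set ((V ⊕ Fin m) ⊕ ({e} : Set (Sym2 (V ⊕ Fin m)))) :=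
    (fun x : V => Sum.inl (Sum.inl x)) '' (S \ {v}) ∪
    ((fun k : Fin m => Sum.inl (Sum.inr k)) '' {k | (k : ℕ) ≠ 1} ∪ {Sum.inr ⟨e, rfl⟩})
    with hDdef
  have hmeml : ∀ x : V, (Sum.inl (Sum.inl x) ∈ D) ↔ x ∈ S ∧ x ≠ v := by
    intro x; simp [hDdef]
  have hmemc : ∀ k : Fin m, (Sum.inl (Sum.inr k) ∈ D) ↔ (k : ℕ) ≠ 1 := by
    intro k; simp [hDdef]
  have hmemr : ∀ f, (Sum.inr f ∈ D) := by
    intro f; rw [subtype_singleton_eq f]; simp [hDdef]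
  refine ⟨D, ?_, ?_⟩
  · intro u hu
    rcases u with (x | k) | f
    · have hx : x ∉ S ∨ x = v := by
        by_contra h
        push_neg at h
        exact hu ((hmeml x).2 ⟨h.1, h.2⟩)
      by_cases hxv : x = v
      · -- witness : the subdivision vertex
        subst hxv
        refine ⟨Sum.inr ⟨e, rfl⟩, hmemr _, ?_⟩
        ext z
        rcases z with (y | k') | f'
        · simp only [Set.mem_inter_iff, SimpleGraph.mem_neighborSet,
            subdivide_adj_inr_inl, Set.mem_compl_iff, Set.mem_singleton_iff, hmeml,
            hee, Sym2.mem_iff, Sum.inl.injEq]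
          constructor
          · rintro ⟨h1, -⟩
            rcases h1 with h1 | h1
            · exact h1
            · simp at h1
          · rintro rfl
            exact ⟨Or.inl rfl, fun h => h.2 rfl⟩
        · simp only [Set.mem_inter_iff, SimpleGraph.mem_neighborSet,
            subdivide_adj_inr_inl, Set.mem_compl_iff, Set.mem_singleton_iff, hmemc,
            hee, Sym2.mem_iff]
          constructor
          · rintro ⟨h1, h2⟩
            exfalso
            rcases h1 with h1 | h1
            · simp at h1
            · have : k' = i := by simpa using h1
              subst this
              have h3 := not_not.1 h2
              omega
          · rintro h
            exact absurd h (by simp)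
        · simp only [Set.mem_inter_iff, SimpleGraph.mem_neighborSet,
            subdivide_adj_inr_inr, Set.mem_compl_iff, Set.mem_singleton_iff]
          constructor
          · rintro ⟨h1, -⟩
            exact h1.elim
          · rintro h
            exact absurd h (by simp)
      · -- x ∈ Sᶜ : use the witness from hwit
        have hxS : x ∉ S := by tauto
        obtain ⟨s, hsS, hsNv, hsw⟩ := hwit x hxS
        have hsv : s ≠ v := fun h => hsNv (by rw [h]; exact Set.mem_insert v _)
        refine ⟨Sum.inl (Sum.inl s), (hmeml s).2 ⟨hsS, hsv⟩, ?_⟩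
        ext z
        rcases z with (y | k') | f'
        · simp only [Set.mem_inter_iff, SimpleGraph.mem_neighborSet,
            subdivide_adj_inl_inl, addStar_adj_inl_inl, Set.mem_compl_iff,
            Set.mem_singleton_iff, hmeml, Sum.inl.injEq]
          constructor
          · rintro ⟨⟨h1, -⟩, h2⟩
            push_neg at h2
            by_cases hyv : y = v
            · exfalso
              apply hsNv
              exact Set.mem_insert_of_mem v (T'.adj_symm (hyv ▸ h1))
            · have hyS : y ∉ S := fun hy => hyv (h2 hy)
              have : y ∈ T'.neighborSet s ∩ Sᶜ := ⟨h1, hyS⟩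
              rw [hsw] at this
              exact this
          · intro hyx
            have hxN : x ∈ T'.neighborSet s ∩ Sᶜ := by rw [hsw]; rfl
            rw [hyx]
            exact ⟨⟨hxN.1, by simp [hee]⟩, fun h => hxN.2 h.1⟩
        · simp only [Set.mem_inter_iff, SimpleGraph.mem_neighborSet,
            subdivide_adj_inl_inl, addStar_adj_inl_inr, Set.mem_compl_iff,
            Set.mem_singleton_iff]
          constructor
          · rintro ⟨⟨⟨rfl, -⟩, -⟩, -⟩
            exact absurd rfl hsv
          · rintro h
            exact absurd h (by simp)
        · simp only [Set.mem_inter_iff, SimpleGraph.mem_neighborSet,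
            subdivide_adj_inl_inr, Set.mem_compl_iff, Set.mem_singleton_iff]
          constructor
          · rintro ⟨h1, -⟩
            rw [subtype_singleton_eq f'] at h1
            simp only [hee, Sym2.mem_iff] at h1
            rcases h1 with h1 | h1
            · exact absurd (by simpa using h1) hsv
            · simp at h1
          · rintro h
            exact absurd h (by simp)
    · -- u = inl (inr k) : the leaf k₁ with (k:ℕ) = 1 ; witness is the center
      have hk1 : (k : ℕ) = 1 := by
        by_contra h
        exact hu ((hmemc k).2 h)
      refine ⟨Sum.inl (Sum.inr i), (hmemc i).2 (by omega), ?_⟩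
      ext z
      rcases z with (y | k') | f'
      · simp only [Set.mem_inter_iff, SimpleGraph.mem_neighborSet,
          subdivide_adj_inl_inl, addStar_adj_inr_inl, Set.mem_compl_iff,
          Set.mem_singleton_iff]
        constructor
        · rintro ⟨⟨⟨rfl, -⟩, h2⟩, -⟩
          exfalso
          apply h2
          rw [hee]
          exact Sym2.eq_swap
        · rintro h
          exact absurd h (by simp)
      · simp only [Set.mem_inter_iff, SimpleGraph.mem_neighborSet,
          subdivide_adj_inl_inl, addStar_adj_inr_inr, Set.mem_compl_iff,
          Set.mem_singleton_iff, hmemc, Sum.inl.injEq, Sum.inr.injEq]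
        constructor
        · rintro ⟨-, h2⟩
          exact Fin.val_injective ((not_not.1 h2).trans hk1.symm)
        · rintro rfl
          refine ⟨⟨Or.inl ⟨hi, by omega⟩, ?_⟩, not_not.2 hk1⟩
          simp [hee]
      · simp only [Set.mem_inter_iff, SimpleGraph.mem_neighborSet,
          subdivide_adj_inl_inr, Set.mem_compl_iff, Set.mem_singleton_iff]
        constructor
        · rintro ⟨-, h2⟩
          exact absurd (hmemr f') h2
        · rintro h
          exact absurd h (by simp)
    · exact absurd (hmemr f) hu
  · -- cardinality
    have h1 := Set.ncard_union_le ((fun x : V => Sum.inl (Sum.inl x)) '' (S \ {v}))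
      (((fun k : Fin m => Sum.inl (Sum.inr k)) '' {k | (k : ℕ) ≠ 1} ∪ {Sum.inr ⟨e, rfl⟩}) :
        Set ((V ⊕ Fin m) ⊕ ({e} : Set (Sym2 (V ⊕ Fin m)))))
    have h2 := Set.ncard_union_le ((fun k : Fin m => Sum.inl (Sum.inr k)) '' {k | (k : ℕ) ≠ 1})
      ({Sum.inr ⟨e, rfl⟩} : Set ((V ⊕ Fin m) ⊕ ({e} : Set (Sym2 (V ⊕ Fin m)))))
    have h3 : (((fun x : V => Sum.inl (Sum.inl x)) :
          V → (V ⊕ Fin m) ⊕ ({e} : Set (Sym2 (V ⊕ Fin m)))) '' (S \ {v})).ncard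
        = (S \ {v}).ncard :=
      Set.ncard_image_of_injective _ (fun a b h => by simpa using h)
    have h4 : (((fun k : Fin m => Sum.inl (Sum.inr k)) :
          Fin m → (V ⊕ Fin m) ⊕ ({e} : Set (Sym2 (V ⊕ Fin m)))) '' {k | (k : ℕ) ≠ 1}).ncard
        = ({k : Fin m | (k : ℕ) ≠ 1}).ncard :=
      Set.ncard_image_of_injective _ (fun a b h => by simpa using h)
    have h5 := ncard_val_ne (show 1 < m by omega)
    have h6 : (S \ {v}).ncard = S.ncard - 1 := Set.ncard_diff_singleton_of_mem hvS
    have h7 : 0 < S.ncard := (Set.ncard_pos (Set.toFinite S)).2 ⟨v, hvS⟩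
    have h8 : ({Sum.inr ⟨e, rfl⟩} : Set ((V ⊕ Fin m) ⊕ ({e} : Set (Sym2 (V ⊕ Fin m))))).ncard = 1 :=
      Set.ncard_singleton _
    rw [hDdef]
    omega

end Constructions3
section TEdge

variable {V : Type}

/-- The transfer map from the subdivision of `T'` at `s(a,b)` into the subdivision of
`addStar T' v m` at `e = s(inl a, inl b)`. -/
def tmap {m : ℕ} (a b : V) (e : Sym2 (V ⊕ Fin m)) (hee : e = s(Sum.inl a, Sum.inl b)) :
    (V ⊕ ({s(a, b)} : Set (Sym2 V))) → ((V ⊕ Fin m) ⊕ ({e} : Set (Sym2 (V ⊕ Fin m)))) :=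
  Sum.elim (fun x => Sum.inl (Sum.inl x)) (fun _ => Sum.inr ⟨e, rfl⟩)

lemma tEdge_core {T' : SimpleGraph V} {v : V} {m : ℕ}
    {a b : V} {e : Sym2 (V ⊕ Fin m)} (hee : e = s(Sum.inl a, Sum.inl b))
    {S₁ : Set (V ⊕ ({s(a, b)} : Set (Sym2 V)))}
    {D : Set ((V ⊕ Fin m) ⊕ ({e} : Set (Sym2 (V ⊕ Fin m))))}
    (hmemll : ∀ x : V, (Sum.inl (Sum.inl x) ∈ D) ↔ Sum.inl x ∈ S₁)
    (hmemrr : ∀ f', (Sum.inr f' ∈ D) ↔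
      Sum.inr (⟨s(a, b), rfl⟩ : ({s(a, b)} : Set (Sym2 V))) ∈ S₁)
    (hstar : ∀ k : Fin m, Sum.inl v ∈ S₁ → (k : ℕ) = 0 → Sum.inl (Sum.inr k) ∈ D)
    {p q : V ⊕ ({s(a, b)} : Set (Sym2 V))} (hp : p ∉ S₁) (hq : q ∈ S₁)
    (hqw : (subdivide T' {s(a, b)}).neighborSet q ∩ S₁ᶜ = {p}) :
    ∃ x ∈ D, (subdivide (addStar T' v m) {e}).neighborSet x ∩ Dᶜ = {tmap a b e hee p} := by
  classical
  rcases q with s | g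
  · -- q = inl s
    refine ⟨Sum.inl (Sum.inl s), (hmemll s).2 hq, ?_⟩
    ext z
    rcases z with (y | k) | f'
    · -- z = inl (inl y)
      constructor
      · rintro ⟨h1, h2⟩
        rw [SimpleGraph.mem_neighborSet, subdivide_adj_inl_inl] at h1
        have hadj : (subdivide T' {s(a, b)}).Adj (Sum.inl s) (Sum.inl y) := by
          rw [subdivide_adj_inl_inl]
          refine ⟨h1.1, ?_⟩
          intro hmem
          apply h1.2
          simp only [hee, Set.mem_singleton_iff, Sym2.eq_iff, Sum.inl.injEq]
          simpa [Sym2.eq_iff] using hmem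
        have hy : Sum.inl y ∈ (subdivide T' {s(a, b)}).neighborSet (Sum.inl s) ∩ S₁ᶜ :=
          ⟨hadj, fun hc => h2 ((hmemll y).2 hc)⟩
        rw [hqw] at hy
        rw [Set.mem_singleton_iff] at hy ⊢
        rw [← hy]
        rfl
      · rintro h
        rw [Set.mem_singleton_iff] at h
        have hy : (Sum.inl y : V ⊕ ({s(a, b)} : Set (Sym2 V))) = p := by
          rcases p with t | g'
          · simpa [tmap] using h
          · exfalso; simp [tmap] at h
        have hmem : (Sum.inl y : V ⊕ ({s(a, b)} : Set (Sym2 V))) ∈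
            (subdivide T' {s(a, b)}).neighborSet (Sum.inl s) ∩ S₁ᶜ := by
          rw [hqw, Set.mem_singleton_iff]; exact hy
        obtain ⟨h1, h2⟩ := hmem
        rw [SimpleGraph.mem_neighborSet, subdivide_adj_inl_inl] at h1
        refine ⟨?_, fun hc => h2 ((hmemll y).1 hc)⟩
        rw [SimpleGraph.mem_neighborSet, subdivide_adj_inl_inl]
        refine ⟨h1.1, ?_⟩
        intro hmem2
        apply h1.2
        simp only [Set.mem_singleton_iff] at hmem2 ⊢
        have := hmem2
        rw [hee] at this
        simpa [Sym2.eq_iff] using this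
    · -- z = inl (inr k) : a star vertex
      constructor
      · rintro ⟨h1, h2⟩
        exfalso
        rw [SimpleGraph.mem_neighborSet, subdivide_adj_inl_inl] at h1
        obtain ⟨⟨rfl, hk0⟩, -⟩ := h1
        exact h2 (hstar k hq hk0)
      · rintro h
        exfalso
        rw [Set.mem_singleton_iff] at h
        rcases p with t | g' <;> simp [tmap] at h
    · -- z = inr f' : the subdivision vertex
      constructor
      · rintro ⟨h1, h2⟩
        rw [SimpleGraph.mem_neighborSet, subdivide_adj_inl_inr] at h1
        have hsab : s ∈ s(a, b) := by
          rw [subtype_singleton_eq f'] at h1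
          simpa [hee, Sym2.mem_iff] using h1
        have hadj : (subdivide T' {s(a, b)}).Adj (Sum.inl s)
            (Sum.inr ⟨s(a, b), rfl⟩) := by
          rw [subdivide_adj_inl_inr]; exact hsab
        have hy : (Sum.inr ⟨s(a, b), rfl⟩ : V ⊕ ({s(a, b)} : Set (Sym2 V))) ∈
            (subdivide T' {s(a, b)}).neighborSet (Sum.inl s) ∩ S₁ᶜ :=
          ⟨hadj, fun hc => h2 ((hmemrr f').2 hc)⟩
        rw [hqw, Set.mem_singleton_iff] at hy
        rw [Set.mem_singleton_iff, ← hy]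
        simp [tmap, subtype_singleton_eq f']
      · rintro h
        rw [Set.mem_singleton_iff] at h
        have hpg : p = Sum.inr (⟨s(a, b), rfl⟩ : ({s(a, b)} : Set (Sym2 V))) := by
          rcases p with t | g'
          · exfalso; simp [tmap] at h
          · rw [subtype_singleton_eq g']
        have hmem : (Sum.inr ⟨s(a, b), rfl⟩ : V ⊕ ({s(a, b)} : Set (Sym2 V))) ∈
            (subdivide T' {s(a, b)}).neighborSet (Sum.inl s) ∩ S₁ᶜ := by
          rw [hqw, Set.mem_singleton_iff, hpg]
        obtain ⟨h1, h2⟩ := hmem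
        rw [SimpleGraph.mem_neighborSet, subdivide_adj_inl_inr] at h1
        refine ⟨?_, fun hc => h2 ((hmemrr f').1 hc)⟩
        rw [SimpleGraph.mem_neighborSet, subdivide_adj_inl_inr,
          subtype_singleton_eq f']
        simpa [hee, Sym2.mem_iff] using h1
  · -- q = inr g : the old subdivision vertex is the witness
    have hgq : g = ⟨s(a, b), rfl⟩ := subtype_singleton_eq g
    subst hgq
    refine ⟨Sum.inr ⟨e, rfl⟩, (hmemrr _).2 hq, ?_⟩
    ext z
    rcases z with (y | k) | f'
    · -- z = inl (inl y)
      constructor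
      · rintro ⟨h1, h2⟩
        rw [SimpleGraph.mem_neighborSet, subdivide_adj_inr_inl] at h1
        have hy : y ∈ s(a, b) := by simpa [hee, Sym2.mem_iff] using h1
        have hmem : (Sum.inl y : V ⊕ ({s(a, b)} : Set (Sym2 V))) ∈
            (subdivide T' {s(a, b)}).neighborSet (Sum.inr ⟨s(a, b), rfl⟩) ∩ S₁ᶜ := by
          refine ⟨?_, fun hc => h2 ((hmemll y).2 hc)⟩
          rw [SimpleGraph.mem_neighborSet, subdivide_adj_inr_inl]
          exact hy
        rw [hqw, Set.mem_singleton_iff] at hmem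
        rw [Set.mem_singleton_iff, ← hmem]
        rfl
      · rintro h
        rw [Set.mem_singleton_iff] at h
        have hy : (Sum.inl y : V ⊕ ({s(a, b)} : Set (Sym2 V))) = p := by
          rcases p with t | g'
          · simpa [tmap] using h
          · exfalso; simp [tmap] at h
        have hmem : (Sum.inl y : V ⊕ ({s(a, b)} : Set (Sym2 V))) ∈
            (subdivide T' {s(a, b)}).neighborSet (Sum.inr ⟨s(a, b), rfl⟩) ∩ S₁ᶜ := by
          rw [hqw, Set.mem_singleton_iff]; exact hy
        obtain ⟨h1, h2⟩ := hmem
        rw [SimpleGraph.mem_neighborSet, subdivide_adj_inr_inl] at h1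
        refine ⟨?_, fun hc => h2 ((hmemll y).1 hc)⟩
        rw [SimpleGraph.mem_neighborSet, subdivide_adj_inr_inl]
        simpa [hee, Sym2.mem_iff] using h1
    · -- z = inl (inr k)
      constructor
      · rintro ⟨h1, -⟩
        exfalso
        rw [SimpleGraph.mem_neighborSet, subdivide_adj_inr_inl] at h1
        simp [hee] at h1
      · rintro h
        exfalso
        rw [Set.mem_singleton_iff] at h
        rcases p with t | g' <;> simp [tmap] at h
    · -- z = inr f'
      constructor
      · rintro ⟨h1, -⟩
        exact absurd h1 (by simp)
      · rintro h
        exfalso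
        rw [Set.mem_singleton_iff] at h
        rcases p with t | g'
        · simp [tmap] at h
        · exact hp (by rw [subtype_singleton_eq g']; exact hq)
end TEdge
section TEdge2

variable {V : Type}

lemma tmap_injective {m : ℕ} (a b : V) (e : Sym2 (V ⊕ Fin m))
    (hee : e = s(Sum.inl a, Sum.inl b)) : Function.Injective (tmap a b e hee) := by
  rintro (x | g) (y | g') h
  · simp only [tmap, Sum.elim_inl, Sum.inl.injEq] at h
    exact congrArg Sum.inl h
  · simp [tmap] at h
  · simp [tmap] at h
  · rw [subtype_singleton_eq g, subtype_singleton_eq g']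

lemma tEdge [Fintype V] {T' : SimpleGraph V} (v : V) {m : ℕ} (hm : 2 ≤ m)
    {a b : V} {e : Sym2 (V ⊕ Fin m)} (hee : e = s(Sum.inl a, Sum.inl b))
    {S₁ : Set (V ⊕ ({s(a, b)} : Set (Sym2 V)))}
    (hS₁ : SuperDomSet (subdivide T' {s(a, b)}) S₁) :
    ∃ D : Set ((V ⊕ Fin m) ⊕ ({e} : Set (Sym2 (V ⊕ Fin m)))),
      SuperDomSet (subdivide (addStar T' v m) {e}) D ∧ D.ncard + 1 ≤ S₁.ncard + m := by
  classical
  by_cases hv : (Sum.inl v : V ⊕ ({s(a, b)} : Set (Sym2 V))) ∈ S₁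
  · -- v ∈ S₁ : star part is everything except the leaf with index value 1
    set D : Set ((V ⊕ Fin m) ⊕ ({e} : Set (Sym2 (V ⊕ Fin m)))) :=
      tmap a b e hee '' S₁ ∪
      (fun k : Fin m => Sum.inl (Sum.inr k)) '' {k | (k : ℕ) ≠ 1} with hDdef
    have hmemll : ∀ x : V, (Sum.inl (Sum.inl x) ∈ D) ↔ Sum.inl x ∈ S₁ := by
      intro x
      constructor
      · rintro (⟨p, hp, hfp⟩ | ⟨k, -, hkeq⟩)
        · rcases p with t | g
          · obtain rfl : t = x := by simpa [tmap] using hfp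
            exact hp
          · exfalso; simp [tmap] at hfp
        · exfalso; simp at hkeq
      · intro h; exact Or.inl ⟨Sum.inl x, h, rfl⟩
    have hmemcc : ∀ k : Fin m, (Sum.inl (Sum.inr k) ∈ D) ↔ (k : ℕ) ≠ 1 := by
      intro k
      constructor
      · rintro (⟨p, hp, hfp⟩ | ⟨k', hk', hkeq⟩)
        · exfalso; rcases p with t | g <;> simp [tmap] at hfp
        · obtain rfl : k' = k := by simpa using hkeq
          exact hk'
      · intro h; exact Or.inr ⟨k, h, rfl⟩
    have hmemrr : ∀ f', (Sum.inr f' ∈ D) ↔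
        Sum.inr (⟨s(a, b), rfl⟩ : ({s(a, b)} : Set (Sym2 V))) ∈ S₁ := by
      intro f'
      constructor
      · rintro (⟨p, hp, hfp⟩ | ⟨k, -, hkeq⟩)
        · rcases p with t | g
          · exfalso; simp [tmap] at hfp
          · rw [subtype_singleton_eq g] at hp; exact hp
        · exfalso; simp at hkeq
      · intro h
        refine Or.inl ⟨Sum.inr ⟨s(a, b), rfl⟩, h, ?_⟩
        rw [subtype_singleton_eq f']
        rfl
    have hstar : ∀ k : Fin m, (Sum.inl v : V ⊕ ({s(a, b)} : Set (Sym2 V))) ∈ S₁ →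
        (k : ℕ) = 0 → Sum.inl (Sum.inr k) ∈ D := by
      intro k _ hk0
      exact (hmemcc k).2 (by omega)
    refine ⟨D, ?_, ?_⟩
    · intro u hu
      rcases u with (x | k) | g
      · have hux : (Sum.inl x : V ⊕ ({s(a, b)} : Set (Sym2 V))) ∉ S₁ :=
          fun h => hu ((hmemll x).2 h)
        obtain ⟨q, hq, hqw⟩ := hS₁ (Sum.inl x) hux
        have := tEdge_core hee hmemll hmemrr hstar hux hq hqw
        simpa [tmap] using this
      · -- u = inl (inr k) : the missing leaf, witness is the center
        have hk : (k : ℕ) = 1 := by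
          by_contra h
          exact hu ((hmemcc k).2 h)
        refine ⟨Sum.inl (Sum.inr (⟨0, by omega⟩ : Fin m)), (hmemcc _).2 (by simp), ?_⟩
        ext z
        rcases z with (y | k') | f'
        · simp only [Set.mem_inter_iff, SimpleGraph.mem_neighborSet,
            subdivide_adj_inl_inl, addStar_adj_inr_inl, Set.mem_compl_iff,
            Set.mem_singleton_iff]
          constructor
          · rintro ⟨⟨⟨rfl, -⟩, -⟩, h2⟩
            exact absurd ((hmemll y).2 hv) h2
          · rintro h
            exact absurd h (by simp)
        · simp only [Set.mem_inter_iff, SimpleGraph.mem_neighborSet,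
            subdivide_adj_inl_inl, addStar_adj_inr_inr, Set.mem_compl_iff,
            Set.mem_singleton_iff, hmemcc, Sum.inl.injEq, Sum.inr.injEq]
          constructor
          · rintro ⟨-, h2⟩
            exact Fin.val_injective ((not_not.1 h2).trans hk.symm)
          · rintro rfl
            refine ⟨⟨Or.inl ⟨by simp, by omega⟩, ?_⟩, not_not.2 hk⟩
            simp [hee]
        · simp only [Set.mem_inter_iff, SimpleGraph.mem_neighborSet,
            subdivide_adj_inl_inr, Set.mem_compl_iff, Set.mem_singleton_iff]
          constructor
          · rintro ⟨h1, -⟩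
            rw [subtype_singleton_eq f'] at h1
            simp [hee] at h1
          · rintro h
            exact absurd h (by simp)
      · have hug : (Sum.inr ⟨s(a, b), rfl⟩ : V ⊕ ({s(a, b)} : Set (Sym2 V))) ∉ S₁ :=
          fun h => hu ((hmemrr g).2 h)
        obtain ⟨q, hq, hqw⟩ := hS₁ _ hug
        have hres := tEdge_core hee hmemll hmemrr hstar hug hq hqw
        have htm : tmap a b e hee (Sum.inr ⟨s(a, b), rfl⟩) = Sum.inr g := by
          rw [subtype_singleton_eq g]; rfl
        rw [htm] at hres
        exact hres
    · -- cardinality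
      have h1 := Set.ncard_union_le (tmap a b e hee '' S₁)
        (((fun k : Fin m => Sum.inl (Sum.inr k)) '' {k | (k : ℕ) ≠ 1}) :
          Set ((V ⊕ Fin m) ⊕ ({e} : Set (Sym2 (V ⊕ Fin m)))))
      have h3 : (tmap a b e hee '' S₁).ncard = S₁.ncard :=
        Set.ncard_image_of_injective _ (tmap_injective a b e hee)
      have h4 : (((fun k : Fin m => Sum.inl (Sum.inr k)) :
            Fin m → (V ⊕ Fin m) ⊕ ({e} : Set (Sym2 (V ⊕ Fin m)))) '' {k | (k : ℕ) ≠ 1}).ncard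
          = ({k : Fin m | (k : ℕ) ≠ 1}).ncard :=
        Set.ncard_image_of_injective _ (fun a b h => by simpa using h)
      have h5 := ncard_val_ne (show 1 < m by omega)
      rw [hDdef]
      omega
  · -- v ∉ S₁ : star part is all the leaves
    set D : Set ((V ⊕ Fin m) ⊕ ({e} : Set (Sym2 (V ⊕ Fin m)))) :=
      tmap a b e hee '' S₁ ∪
      (fun k : Fin m => Sum.inl (Sum.inr k)) '' {k | (k : ℕ) ≠ 0} with hDdef
    have hmemll : ∀ x : V, (Sum.inl (Sum.inl x) ∈ D) ↔ Sum.inl x ∈ S₁ := by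
      intro x
      constructor
      · rintro (⟨p, hp, hfp⟩ | ⟨k, -, hkeq⟩)
        · rcases p with t | g
          · obtain rfl : t = x := by simpa [tmap] using hfp
            exact hp
          · exfalso; simp [tmap] at hfp
        · exfalso; simp at hkeq
      · intro h; exact Or.inl ⟨Sum.inl x, h, rfl⟩
    have hmemcc : ∀ k : Fin m, (Sum.inl (Sum.inr k) ∈ D) ↔ (k : ℕ) ≠ 0 := by
      intro k
      constructor
      · rintro (⟨p, hp, hfp⟩ | ⟨k', hk', hkeq⟩)
        · exfalso; rcases p with t | g <;> simp [tmap] at hfp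
        · obtain rfl : k' = k := by simpa using hkeq
          exact hk'
      · intro h; exact Or.inr ⟨k, h, rfl⟩
    have hmemrr : ∀ f', (Sum.inr f' ∈ D) ↔
        Sum.inr (⟨s(a, b), rfl⟩ : ({s(a, b)} : Set (Sym2 V))) ∈ S₁ := by
      intro f'
      constructor
      · rintro (⟨p, hp, hfp⟩ | ⟨k, -, hkeq⟩)
        · rcases p with t | g
          · exfalso; simp [tmap] at hfp
          · rw [subtype_singleton_eq g] at hp; exact hp
        · exfalso; simp at hkeq
      · intro h
        refine Or.inl ⟨Sum.inr ⟨s(a, b), rfl⟩, h, ?_⟩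
        rw [subtype_singleton_eq f']
        rfl
    have hstar : ∀ k : Fin m, (Sum.inl v : V ⊕ ({s(a, b)} : Set (Sym2 V))) ∈ S₁ →
        (k : ℕ) = 0 → Sum.inl (Sum.inr k) ∈ D := by
      intro k hvv _
      exact absurd hvv hv
    refine ⟨D, ?_, ?_⟩
    · intro u hu
      rcases u with (x | k) | g
      · have hux : (Sum.inl x : V ⊕ ({s(a, b)} : Set (Sym2 V))) ∉ S₁ :=
          fun h => hu ((hmemll x).2 h)
        obtain ⟨q, hq, hqw⟩ := hS₁ (Sum.inl x) hux
        have := tEdge_core hee hmemll hmemrr hstar hux hq hqw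
        simpa [tmap] using this
      · -- u = inl (inr k) : the center, witness is the leaf with value 1
        have hk : (k : ℕ) = 0 := by
          by_contra h
          exact hu ((hmemcc k).2 h)
        refine ⟨Sum.inl (Sum.inr (⟨1, by omega⟩ : Fin m)), (hmemcc _).2 (by simp), ?_⟩
        ext z
        rcases z with (y | k') | f'
        · simp only [Set.mem_inter_iff, SimpleGraph.mem_neighborSet,
            subdivide_adj_inl_inl, addStar_adj_inr_inl, Set.mem_compl_iff,
            Set.mem_singleton_iff]
          constructor
          · rintro ⟨⟨⟨-, h1⟩, -⟩, -⟩
            simp at h1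
          · rintro h
            exact absurd h (by simp)
        · simp only [Set.mem_inter_iff, SimpleGraph.mem_neighborSet,
            subdivide_adj_inl_inl, addStar_adj_inr_inr, Set.mem_compl_iff,
            Set.mem_singleton_iff, hmemcc, Sum.inl.injEq, Sum.inr.injEq]
          constructor
          · rintro ⟨-, h2⟩
            exact Fin.val_injective ((not_not.1 h2).trans hk.symm)
          · rintro rfl
            refine ⟨⟨Or.inr ⟨hk, by simp⟩, ?_⟩, not_not.2 hk⟩
            simp [hee]
        · simp only [Set.mem_inter_iff, SimpleGraph.mem_neighborSet,
            subdivide_adj_inl_inr, Set.mem_compl_iff, Set.mem_singleton_iff]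
          constructor
          · rintro ⟨h1, -⟩
            rw [subtype_singleton_eq f'] at h1
            simp [hee] at h1
          · rintro h
            exact absurd h (by simp)
      · have hug : (Sum.inr ⟨s(a, b), rfl⟩ : V ⊕ ({s(a, b)} : Set (Sym2 V))) ∉ S₁ :=
          fun h => hu ((hmemrr g).2 h)
        obtain ⟨q, hq, hqw⟩ := hS₁ _ hug
        have hres := tEdge_core hee hmemll hmemrr hstar hug hq hqw
        have htm : tmap a b e hee (Sum.inr ⟨s(a, b), rfl⟩) = Sum.inr g := by
          rw [subtype_singleton_eq g]; rfl
        rw [htm] at hres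
        exact hres
    · have h1 := Set.ncard_union_le (tmap a b e hee '' S₁)
        (((fun k : Fin m => Sum.inl (Sum.inr k)) '' {k | (k : ℕ) ≠ 0}) :
          Set ((V ⊕ Fin m) ⊕ ({e} : Set (Sym2 (V ⊕ Fin m)))))
      have h3 : (tmap a b e hee '' S₁).ncard = S₁.ncard :=
        Set.ncard_image_of_injective _ (tmap_injective a b e hee)
      have h4 : (((fun k : Fin m => Sum.inl (Sum.inr k)) :
            Fin m → (V ⊕ Fin m) ⊕ ({e} : Set (Sym2 (V ⊕ Fin m)))) '' {k | (k : ℕ) ≠ 0}).ncard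
          = ({k : Fin m | (k : ℕ) ≠ 0}).ncard :=
        Set.ncard_image_of_injective _ (fun a b h => by simpa using h)
      have h5 := ncard_val_ne (show 0 < m by omega)
      rw [hDdef]
      omega

end TEdge2
section LowerBound

variable {V : Type}

lemma ncard_sum_decomp {α β : Type} [Finite α] [Finite β] (D : Set (α ⊕ β)) :
    D.ncard = {a | Sum.inl a ∈ D}.ncard + {b | Sum.inr b ∈ D}.ncard := by
  have h : D = Sum.inl '' {a | Sum.inl a ∈ D} ∪ Sum.inr '' {b | Sum.inr b ∈ D} := by
    ext x; cases x <;> simp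
  have hdisj : Disjoint (Sum.inl '' {a | Sum.inl a ∈ D})
      (Sum.inr '' {b | Sum.inr b ∈ D}) := by
    rw [Set.disjoint_left]
    rintro x ⟨a, _, rfl⟩ ⟨b, _, hb⟩
    exact Sum.inl_ne_inr hb.symm
  conv_lhs => rw [h]
  rw [Set.ncard_union_eq hdisj (Set.toFinite _) (Set.toFinite _),
    Set.ncard_image_of_injective _ Sum.inl_injective,
    Set.ncard_image_of_injective _ Sum.inr_injective]

lemma superDomNum_addStar_lower [Fintype V] (G : SimpleGraph V) (v : V) (m : ℕ)
    (hm : 1 ≤ m) :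
    superDomNum G + m ≤ superDomNum (addStar G v m) + 1 := by
  obtain ⟨D, hD, hDc⟩ := exists_min_sds (addStar G v m)
  set D₀ : Set V := {a | Sum.inl a ∈ D} with hD₀def
  set D₁ : Set (Fin m) := {i | Sum.inr i ∈ D} with hD₁def
  have hdec : D.ncard = D₀.ncard + D₁.ncard := ncard_sum_decomp D
  have hz : (0 : ℕ) < m := hm
  set z : Fin m := ⟨0, hz⟩ with hzdef
  -- generic: an `inl` witness yields a witness in G
  have hinlwit : ∀ (s u : V), Sum.inl s ∈ D →
      (addStar G v m).neighborSet (Sum.inl s) ∩ Dᶜ = {Sum.inl u} →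
      s ∈ D₀ ∧ G.neighborSet s ∩ D₀ᶜ = {u} := by
    intro s u hsD hs
    refine ⟨hsD, ?_⟩
    ext y
    have h1 : (Sum.inl y ∈ (addStar G v m).neighborSet (Sum.inl s) ∩ Dᶜ) ↔
        Sum.inl y ∈ ({Sum.inl u} : Set (V ⊕ Fin m)) := by rw [hs]
    simp only [Set.mem_inter_iff, SimpleGraph.mem_neighborSet, addStar_adj_inl_inl,
      Set.mem_compl_iff, Set.mem_singleton_iff, Sum.inl.injEq] at h1
    simp only [Set.mem_inter_iff, SimpleGraph.mem_neighborSet, Set.mem_compl_iff,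
      Set.mem_singleton_iff, hD₀def, Set.mem_setOf_eq]
    exact h1
  by_cases hall : ∀ i : Fin m, (i : ℕ) ≠ 0 → Sum.inr i ∈ D
  · by_cases hc : Sum.inr z ∈ D
    · -- Case C : the whole star is in D
      have hD₁ : D₁ = Set.univ := by
        apply Set.eq_univ_iff_forall.2
        intro i
        by_cases h0 : (i : ℕ) = 0
        · have : i = z := Fin.val_injective (by simp [hzdef, h0])
          rw [hD₁def]; simpa [this] using hc
        · exact hall i h0
      have hcard1 : D₁.ncard = m := by rw [hD₁, Set.ncard_univ, Nat.card_eq_fintype_card,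
        Fintype.card_fin]
      have hsds : SuperDomSet G (D₀ ∪ {v}) := by
        intro u hu
        have huv : u ≠ v := by intro h; exact hu (Or.inr h)
        have huD : Sum.inl u ∈ Dᶜ := fun h => hu (Or.inl h)
        obtain ⟨x, hxD, hx⟩ := hD _ huD
        have hadj : (addStar G v m).Adj x (Sum.inl u) := by
          have h2 : Sum.inl u ∈ (addStar G v m).neighborSet x ∩ Dᶜ := by rw [hx]; rfl
          exact h2.1
        rcases x with s | i
        · obtain ⟨hs1, hs2⟩ := hinlwit s u hxD hx
          refine ⟨s, Or.inl hs1, ?_⟩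
          have hrw : G.neighborSet s ∩ (D₀ ∪ {v})ᶜ = (G.neighborSet s ∩ D₀ᶜ) \ {v} := by
            ext y
            simp only [Set.mem_inter_iff, Set.mem_compl_iff, Set.mem_union, Set.mem_diff,
              Set.mem_singleton_iff]
            tauto
          rw [hrw, hs2]
          ext y
          simp only [Set.mem_diff, Set.mem_singleton_iff]
          constructor
          · exact fun h => h.1
          · rintro rfl; exact ⟨rfl, huv⟩
        · exact absurd (addStar_adj_inr_inl.1 hadj).1 huv
      have h5 : ({v} : Set V).ncard = 1 := Set.ncard_singleton v
      have h6 := Set.ncard_union_le D₀ ({v} : Set V)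
      have h7 := superDomNum_le_ncard hsds
      rw [← hDc, hdec, hcard1]
      omega
    · -- Case B : all leaves in D, center not in D
      have hsub : {i : Fin m | (i : ℕ) ≠ 0} ⊆ D₁ := fun i hi => hall i hi
      have hcard1 : m ≤ D₁.ncard + 1 := by
        have h1 : {i : Fin m | (i : ℕ) ≠ 0} = ({z} : Set (Fin m))ᶜ := by
          ext i
          simp only [Set.mem_setOf_eq, Set.mem_compl_iff, Set.mem_singleton_iff]
          constructor
          · intro h hiz; rw [hiz] at h; simp [hzdef] at h
          · intro h h0; exact h (Fin.val_injective (by simp [hzdef, h0]))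
        have h2 : ({z} : Set (Fin m)).ncard + (({z} : Set (Fin m))ᶜ).ncard = m := by
          rw [Set.ncard_add_ncard_compl, Nat.card_eq_fintype_card, Fintype.card_fin]
        have h3 : ({z} : Set (Fin m)).ncard = 1 := Set.ncard_singleton z
        have h4 := Set.ncard_le_ncard hsub (Set.toFinite _)
        rw [h1] at h4; omega
      have hsds : SuperDomSet G D₀ := by
        intro u hu
        obtain ⟨x, hxD, hx⟩ := hD (Sum.inl u) hu
        have hadj : (addStar G v m).Adj x (Sum.inl u) := by
          have h2 : Sum.inl u ∈ (addStar G v m).neighborSet x ∩ Dᶜ := by rw [hx]; rfl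
          exact h2.1
        rcases x with s | i
        · obtain ⟨hs1, hs2⟩ := hinlwit s u hxD hx
          exact ⟨s, hs1, hs2⟩
        · exfalso
          have h0 := (addStar_adj_inr_inl.1 hadj).2
          have : i = z := Fin.val_injective (by simp [hzdef, h0])
          rw [this] at hxD
          exact hc hxD
      have h7 := superDomNum_le_ncard hsds
      rw [← hDc, hdec]
      omega
  · -- Case A : some leaf is outside D
    push_neg at hall
    obtain ⟨i₀, hi₀0, hi₀D⟩ := hall
    obtain ⟨x, hxD, hx⟩ := hD (Sum.inr i₀) hi₀D
    have hadj : (addStar G v m).Adj x (Sum.inr i₀) := by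
      have h2 : Sum.inr i₀ ∈ (addStar G v m).neighborSet x ∩ Dᶜ := by rw [hx]; rfl
      exact h2.1
    rcases x with a | j
    · exact absurd (addStar_adj_inl_inr.1 hadj).2 hi₀0
    have hj0 : (j : ℕ) = 0 := by
      rcases addStar_adj_inr_inr.1 hadj with ⟨h1, _⟩ | ⟨h1, h2⟩
      · exact h1
      · exact absurd h1 hi₀0
    have hleaf : ∀ i : Fin m, i ≠ i₀ → Sum.inr i ∈ D := by
      intro i hi
      by_cases h0 : (i : ℕ) = 0
      · have : i = j := Fin.val_injective (by rw [h0, hj0])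
        rw [this]; exact hxD
      · by_contra hiD
        have h3 : Sum.inr i ∈ (addStar G v m).neighborSet (Sum.inr j) ∩ Dᶜ :=
          ⟨(addStar_adj_inr_inr (G:=G) (v:=v)).2 (Or.inl ⟨hj0, h0⟩), hiD⟩
        rw [hx] at h3
        exact hi (Sum.inr_injective (Set.mem_singleton_iff.1 h3))
    have hsub : ({i₀} : Set (Fin m))ᶜ ⊆ D₁ := fun i hi => hleaf i hi
    have hcard1 : m ≤ D₁.ncard + 1 := by
      have h2 : ({i₀} : Set (Fin m)).ncard + (({i₀} : Set (Fin m))ᶜ).ncard = m := by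
        rw [Set.ncard_add_ncard_compl, Nat.card_eq_fintype_card, Fintype.card_fin]
      have h3 : ({i₀} : Set (Fin m)).ncard = 1 := Set.ncard_singleton i₀
      have h4 := Set.ncard_le_ncard hsub (Set.toFinite _)
      omega
    have hsds : SuperDomSet G D₀ := by
      intro u hu
      obtain ⟨x, hxD2, hx2⟩ := hD (Sum.inl u) hu
      have hadj2 : (addStar G v m).Adj x (Sum.inl u) := by
        have h2 : Sum.inl u ∈ (addStar G v m).neighborSet x ∩ Dᶜ := by rw [hx2]; rfl
        exact h2.1
      rcases x with s | i
      · obtain ⟨hs1, hs2⟩ := hinlwit s u hxD2 hx2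
        exact ⟨s, hs1, hs2⟩
      · exfalso
        have h0 := (addStar_adj_inr_inl.1 hadj2).2
        have h3 : Sum.inr i₀ ∈ (addStar G v m).neighborSet (Sum.inr i) ∩ Dᶜ :=
          ⟨(addStar_adj_inr_inr (G:=G) (v:=v)).2 (Or.inl ⟨h0, hi₀0⟩), hi₀D⟩
        rw [hx2] at h3
        exact Sum.inr_ne_inl h3
    have h7 := superDomNum_le_ncard hsds
    rw [← hDc, hdec]
    omega

end LowerBound
/-- Operation 𝒰₁ preserves Class 2: if no single edge subdivision increases
`γ_sp(T')`, and `T` is obtained from `T'` by adding a star of order `m ≥ 2` joined to a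
suitable vertex `v`, then no single edge subdivision increases `γ_sp(T)`. -/
theorem classTwo_preserved_addStar {V : Type} [Fintype V] (T' : SimpleGraph V)
    (hT' : T'.IsTree) (v : V) (S : Set V) (hS : SuperDomSet T' S)
    (hmin : S.ncard = superDomNum T') (hvS : v ∈ S)
    (hv : insert v (T'.neighborSet v) ∩ Sᶜ = ∅ ∨
          insert v (T'.neighborSet v) ∩ USet T' S = ∅)
    (m : ℕ) (hm : 2 ≤ m)
    (hclass : ∀ e ∈ T'.edgeSet, superDomNum (subdivide T' {e}) ≤ superDomNum T') :
    ∀ e ∈ (addStar T' v m).edgeSet,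
      superDomNum (subdivide (addStar T' v m) {e}) ≤ superDomNum (addStar T' v m) := by
  intro e he
  have hγA := superDomNum_addStar_lower T' v m (by omega)
  have hred : ∀ (e' : Sym2 (V ⊕ Fin m)),
      (∃ D : Set ((V ⊕ Fin m) ⊕ ({e'} : Set (Sym2 (V ⊕ Fin m)))),
        SuperDomSet (subdivide (addStar T' v m) {e'}) D ∧
          D.ncard + 1 ≤ superDomNum T' + m) →
      superDomNum (subdivide (addStar T' v m) {e'}) ≤ superDomNum (addStar T' v m) := by
    rintro e' ⟨D, hD1, hD2⟩
    have := superDomNum_le_ncard hD1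
    omega
  induction e using Sym2.ind with
  | _ x y =>
  rw [SimpleGraph.mem_edgeSet] at he
  apply hred
  rcases x with A | i <;> rcases y with B | j
  · -- an edge of T'
    have hab : T'.Adj A B := he
    obtain ⟨S₁, hS₁, hS₁c⟩ := exists_min_sds (subdivide T' {s(A, B)})
    have hle : S₁.ncard ≤ superDomNum T' := by
      rw [hS₁c]
      exact hclass _ (by rwa [SimpleGraph.mem_edgeSet])
    obtain ⟨D, h1, h2⟩ := tEdge v hm rfl hS₁
    exact ⟨D, h1, by omega⟩
  · -- the bridge edge, written as s(inl v, inr j)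
    obtain ⟨rfl, hj0⟩ := he
    rcases hv with hv1 | hv2
    · obtain ⟨D, h1, h2⟩ := bridge₁ hS hvS hm hv1 hj0 rfl
      exact ⟨D, h1, by omega⟩
    · have hwit := exists_witness_outside hT' hS hvS hv2
      obtain ⟨D, h1, h2⟩ := bridge₂ hvS hm hwit hj0 rfl
      exact ⟨D, h1, by omega⟩
  · -- the bridge edge, written as s(inr i, inl v)
    obtain ⟨rfl, hi0⟩ := he
    rcases hv with hv1 | hv2
    · obtain ⟨D, h1, h2⟩ := bridge₁ hS hvS hm hv1 hi0 Sym2.eq_swap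
      exact ⟨D, h1, by omega⟩
    · have hwit := exists_witness_outside hT' hS hvS hv2
      obtain ⟨D, h1, h2⟩ := bridge₂ hvS hm hwit hi0 Sym2.eq_swap
      exact ⟨D, h1, by omega⟩
  · -- a star leaf edge
    rcases he with ⟨hi0, hj0⟩ | ⟨hj0, hi0⟩
    · rcases hv with hv1 | hv2
      · obtain ⟨D, h1, h2⟩ := starLeaf₁ hS hvS hm hv1 hi0 hj0 rfl
        exact ⟨D, h1, by omega⟩
      · have hwit := exists_witness_outside hT' hS hvS hv2
        obtain ⟨D, h1, h2⟩ := starLeaf₂ hvS hm hwit hi0 hj0 rfl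
        exact ⟨D, h1, by omega⟩
    · rcases hv with hv1 | hv2
      · obtain ⟨D, h1, h2⟩ := starLeaf₁ hS hvS hm hv1 hj0 hi0 Sym2.eq_swap
        exact ⟨D, h1, by omega⟩
      · have hwit := exists_witness_outside hT' hS hvS hv2
        obtain ⟨D, h1, h2⟩ := starLeaf₂ hvS hm hwit hj0 hi0 Sym2.eq_swap
        exact ⟨D, h1, by omega⟩
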